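/- Let $h_1, \dots, h_p$ be pairwise distinct nonzero reals and let $B_1, \dots, B_p$ be the solution of $\sum_m B_m h_m^i = C_i$ for $i = 1, \dots, p$. If additionally all $|h_m| \le H$ and $v$ is $(p+1)$-times continuously differentiable with $|v^{(p+1)}| \le M$ on an interval containing all points $t_{n-1} + h_m$, $t_{n-1}$, and $t_n$, then $\left| \int_{t_{n-1}}^{t_n} v(s)\,ds - (t_n - t_{n-1}) v(t_{n-1}) - \sum_{m=1}^p B_m \big(v(t_{n-1} + h_m) - v(t_{n-1})\big) \right| \le \frac{M}{(p+1)!} \left( \frac{|t_n - t_{n-1}|^{p+2}}{p+2} + H^{p+1} \sum_{m=1}^p |B_m| \right)$. -/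

import Mathlib

open MeasureTheory Finset

lemma integral_sub_pow' (c x : ℝ) (n : ℕ) :
    ∫ s in c..x, (s - c) ^ n = (x - c) ^ (n + 1) / (n + 1) := by
  rw [show (∫ s in c..x, (s - c) ^ n) = ∫ s in c..x, (fun u : ℝ => u ^ n) (s - c) from rfl,
    intervalIntegral.integral_comp_sub_right (fun u : ℝ => u ^ n) c,
    integral_pow]
  simp

lemma abs_integral_abs_pow (c x : ℝ) (n : ℕ) :
    |∫ s in c..x, |s - c| ^ n| = |x - c| ^ (n + 1) / (n + 1) := by
  rcases le_total c x with hcx | hxc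
  · have h1 : ∫ s in c..x, |s - c| ^ n = ∫ s in c..x, (s - c) ^ n := by
      apply intervalIntegral.integral_congr
      intro s hs
      rw [Set.uIcc_of_le hcx] at hs
      dsimp only
      rw [abs_of_nonneg (by linarith [hs.1] : (0:ℝ) ≤ s - c)]
    rw [h1, integral_sub_pow', abs_div, abs_pow]
    congr 1
    exact abs_of_nonneg (by positivity)
  · have h1 : ∫ s in c..x, |s - c| ^ n = - ∫ s in x..c, ((fun u : ℝ => u ^ n) (c - s)) := by
      rw [← intervalIntegral.integral_symm]
      apply intervalIntegral.integral_congr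
      intro s hs
      rw [Set.uIcc_comm, Set.uIcc_of_le hxc] at hs
      dsimp only
      rw [abs_of_nonpos (by linarith [hs.2] : s - c ≤ 0), neg_sub]
    rw [h1, intervalIntegral.integral_comp_sub_left (fun u : ℝ => u ^ n) c,
      integral_pow]
    have hcx' : (0:ℝ) ≤ c - x := by linarith
    rw [abs_sub_comm x c, abs_of_nonneg hcx']
    rw [abs_neg, abs_div]
    rw [show c - c = (0:ℝ) by ring, show (0:ℝ) ^ (n+1) = 0 by simp]
    rw [abs_of_nonneg (by simp; positivity : (0:ℝ) ≤ (c - x)^(n+1) - 0)]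
    rw [abs_of_nonneg (by positivity : (0:ℝ) ≤ ((n:ℝ)+1))]
    ring

lemma taylor_remainder_bound (a b : ℝ) (hab : a ≤ b) :
    ∀ (n : ℕ) (f : ℝ → ℝ) (M : ℝ), ContDiff ℝ n f → ∀ c ∈ Set.Icc a b,
      (∀ s ∈ Set.Icc a b, |iteratedDeriv n f s| ≤ M) →
      ∀ x ∈ Set.Icc a b,
      |f x - ∑ i ∈ Finset.range n, iteratedDeriv i f c * (x - c) ^ i / (Nat.factorial i)| ≤
        M * |x - c| ^ n / (Nat.factorial n) := by
  intro n
  induction n with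
  | zero =>
    intro f M hf c hc hM x hx
    simpa using hM x hx
  | succ n ih =>
    intro f M hf c hc hM x hx
    have hM0 : 0 ≤ M := le_trans (abs_nonneg _) (hM c hc)
    have hf1 : ContDiff ℝ ((n : WithTop ℕ∞) + 1) f := by exact_mod_cast hf
    have hf' : ContDiff ℝ n (deriv f) := (contDiff_succ_iff_deriv.mp hf1).2.2
    have hM' : ∀ s ∈ Set.Icc a b, |iteratedDeriv n (deriv f) s| ≤ M := by
      intro s hs
      rw [← iteratedDeriv_succ']
      exact hM s hs
    have hdf : Differentiable ℝ f := (contDiff_succ_iff_deriv.mp hf1).1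
    -- derivative of the remainder
    have hgd : ∀ s : ℝ, HasDerivAt
        (fun u => f u - ∑ i ∈ Finset.range (n+1),
          iteratedDeriv i f c * (u - c) ^ i / (Nat.factorial i))
        (deriv f s - ∑ i ∈ Finset.range n,
          iteratedDeriv i (deriv f) c * (s - c) ^ i / (Nat.factorial i)) s := by
      intro s
      have h1 : HasDerivAt f (deriv f s) s := (hdf s).hasDerivAt
      have h2 : ∀ i : ℕ, HasDerivAt
          (fun u : ℝ => iteratedDeriv i f c * (u - c) ^ i / (Nat.factorial i))
          (iteratedDeriv i f c * ((i : ℝ) * (s - c) ^ (i - 1) * 1) / (Nat.factorial i)) s := by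
        intro i
        exact ((((hasDerivAt_id s).sub_const c).pow i).const_mul
          (iteratedDeriv i f c)).div_const (Nat.factorial i)
      have h3 : HasDerivAt
          (fun u => ∑ i ∈ Finset.range (n+1),
            iteratedDeriv i f c * (u - c) ^ i / (Nat.factorial i))
          (∑ i ∈ Finset.range (n+1),
            iteratedDeriv i f c * ((i : ℝ) * (s - c) ^ (i - 1) * 1) / (Nat.factorial i)) s :=
        HasDerivAt.fun_sum (fun i _ => h2 i)
      have h4 : ∑ i ∈ Finset.range (n+1),
            iteratedDeriv i f c * ((i : ℝ) * (s - c) ^ (i - 1) * 1) / (Nat.factorial i)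
          = ∑ i ∈ Finset.range n,
            iteratedDeriv i (deriv f) c * (s - c) ^ i / (Nat.factorial i) := by
        rw [Finset.sum_range_succ']
        simp only [Nat.cast_zero, zero_mul, mul_zero, zero_div, add_zero]
        apply Finset.sum_congr rfl
        intro i _
        rw [← iteratedDeriv_succ']
        have hfac : ((Nat.factorial (i+1) : ℝ)) = (i+1) * Nat.factorial i := by
          rw [Nat.factorial_succ]; push_cast; ring
        have h5 : ((Nat.factorial i : ℝ)) ≠ 0 := by positivity
        rw [Nat.add_sub_cancel, hfac]
        push_cast
        field_simp
      rw [h4] at h3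
      exact h1.sub h3
    -- the remainder vanishes at c
    have hgc : f c - ∑ i ∈ Finset.range (n+1),
        iteratedDeriv i f c * (c - c) ^ i / (Nat.factorial i) = 0 := by
      rw [Finset.sum_range_succ']
      simp
    -- continuity of the derivative
    have hcont' : Continuous (fun s => deriv f s - ∑ i ∈ Finset.range n,
        iteratedDeriv i (deriv f) c * (s - c) ^ i / (Nat.factorial i)) := by
      apply hf'.continuous.sub
      apply continuous_finset_sum
      intro i _
      exact (continuous_const.mul ((continuous_id.sub continuous_const).pow i)).div_const _
    -- FTC
    have hftc := intervalIntegral.integral_eq_sub_of_hasDerivAt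
      (f' := fun s => deriv f s - ∑ i ∈ Finset.range n,
        iteratedDeriv i (deriv f) c * (s - c) ^ i / (Nat.factorial i))
      (fun s _ => hgd s) (hcont'.intervalIntegrable c x)
    have key : f x - ∑ i ∈ Finset.range (n+1),
        iteratedDeriv i f c * (x - c) ^ i / (Nat.factorial i)
        = ∫ s in c..x, (deriv f s - ∑ i ∈ Finset.range n,
            iteratedDeriv i (deriv f) c * (s - c) ^ i / (Nat.factorial i)) := by
      rw [hftc, hgc, sub_zero]
    rw [key]
    -- bound the integral
    have hsub : Set.uIoc c x ⊆ Set.Icc a b := by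
      intro t ht
      have h2 : Set.uIcc c x ⊆ Set.Icc a b := by
        rw [← Set.uIcc_of_le hab]
        exact Set.uIcc_subset_uIcc (by rwa [Set.uIcc_of_le hab]) (by rwa [Set.uIcc_of_le hab])
      exact h2 (Set.Ioc_subset_Icc_self ht)
    have hb1 : ‖∫ s in c..x, (deriv f s - ∑ i ∈ Finset.range n,
          iteratedDeriv i (deriv f) c * (s - c) ^ i / (Nat.factorial i))‖ ≤
        |∫ s in c..x, M * |s - c| ^ n / (Nat.factorial n)| := by
      apply intervalIntegral.norm_integral_le_abs_of_norm_le
      · refine (MeasureTheory.ae_restrict_mem measurableSet_uIoc).mono (fun t ht => ?_)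
        exact ih (deriv f) M hf' c hc hM' t (hsub ht)
      · exact ((continuous_const.mul ((continuous_id.sub continuous_const).abs.pow n)).div_const
          _).intervalIntegrable c x
    have hcomp : |∫ s in c..x, M * |s - c| ^ n / (Nat.factorial n)| =
        M * |x - c| ^ (n+1) / (Nat.factorial (n+1)) := by
      have heq : (fun s => M * |s - c| ^ n / (Nat.factorial n)) =
          fun s => (M / Nat.factorial n) * |s - c| ^ n := by
        funext s; ring
      rw [heq, intervalIntegral.integral_const_mul, abs_mul,
        abs_of_nonneg (div_nonneg hM0 (Nat.cast_nonneg _)), abs_integral_abs_pow,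
        div_mul_div_comm, Nat.factorial_succ]
      push_cast
      congr 1
      ring
    calc ‖∫ s in c..x, (deriv f s - ∑ i ∈ Finset.range n,
          iteratedDeriv i (deriv f) c * (s - c) ^ i / (Nat.factorial i))‖ ≤
        |∫ s in c..x, M * |s - c| ^ n / (Nat.factorial n)| := hb1
      _ = M * |x - c| ^ (n+1) / (Nat.factorial (n+1)) := hcomp

theorem flow_solver_quantitative_error_bound (p : ℕ) (v : ℝ → ℝ)
    (tₙ₁ tₙ H M a b : ℝ) (h : Fin p → ℝ) (B : Fin p → ℝ)
    (hdist : Function.Injective h) (hne : ∀ m, h m ≠ 0)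
    (hH : ∀ m, |h m| ≤ H)
    (hB : ∀ i : Fin p,
      ∑ m, B m * h m ^ ((i : ℕ) + 1) =
        (tₙ - tₙ₁) ^ ((i : ℕ) + 2) / ((i : ℕ) + 2))
    (hv : ContDiff ℝ (p + 1) v)
    (hab : a ≤ b)
    (hmem₁ : ∀ m, tₙ₁ + h m ∈ Set.Icc a b)
    (hmem₂ : tₙ₁ ∈ Set.Icc a b) (hmem₃ : tₙ ∈ Set.Icc a b)
    (hM : ∀ s ∈ Set.Icc a b, |iteratedDeriv (p + 1) v s| ≤ M) :
    |(∫ s in tₙ₁..tₙ, v s) - (tₙ - tₙ₁) * v tₙ₁ -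
        ∑ m, B m * (v (tₙ₁ + h m) - v tₙ₁)| ≤
      M / (Nat.factorial (p + 1) : ℝ) *
        (|tₙ - tₙ₁| ^ (p + 2) / (p + 2) + H ^ (p + 1) * ∑ m, |B m|) := by
  have hv' : ContDiff ℝ ((p + 1 : ℕ)) v := by exact_mod_cast hv
  have hM0 : 0 ≤ M := le_trans (abs_nonneg _) (hM tₙ₁ hmem₂)
  have hfac0 : ((Nat.factorial (p+1) : ℝ)) ≠ 0 := by positivity
  -- remainder bound
  have hRbound : ∀ x ∈ Set.Icc a b,
      |v x - ∑ i ∈ Finset.range (p+1),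
          iteratedDeriv i v tₙ₁ * (x - tₙ₁) ^ i / (Nat.factorial i)| ≤
        M * |x - tₙ₁| ^ (p+1) / (Nat.factorial (p+1)) :=
    fun x hx => taylor_remainder_bound a b hab (p+1) v M hv' tₙ₁ hmem₂ hM x hx
  have hPcont : Continuous (fun s => ∑ i ∈ Finset.range (p+1),
      iteratedDeriv i v tₙ₁ * (s - tₙ₁) ^ i / (Nat.factorial i)) := by
    apply continuous_finset_sum
    intro i _
    exact (continuous_const.mul ((continuous_id.sub continuous_const).pow i)).div_const _
  have hvc : Continuous v := hv.continuous
  -- Step A : integral of the Taylor polynomial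
  have hPint : ∫ s in tₙ₁..tₙ, (∑ i ∈ Finset.range (p+1),
        iteratedDeriv i v tₙ₁ * (s - tₙ₁) ^ i / (Nat.factorial i))
      = ∑ i ∈ Finset.range (p+1),
        iteratedDeriv i v tₙ₁ * (tₙ - tₙ₁) ^ (i+1) / (((i:ℝ)+1) * (Nat.factorial i)) := by
    rw [intervalIntegral.integral_finset_sum
      (f := fun (i : ℕ) (s : ℝ) => iteratedDeriv i v tₙ₁ * (s - tₙ₁) ^ i / (Nat.factorial i))
      (fun i _ =>
      ((continuous_const.mul ((continuous_id.sub continuous_const).pow i)).div_const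
        _).intervalIntegrable _ _)]
    refine Finset.sum_congr rfl fun i _ => ?_
    have heq : (fun s : ℝ => iteratedDeriv i v tₙ₁ * (s - tₙ₁) ^ i / (Nat.factorial i)) =
        fun s => (iteratedDeriv i v tₙ₁ / (Nat.factorial i)) * (s - tₙ₁) ^ i := by
      funext s; ring
    rw [heq, intervalIntegral.integral_const_mul, integral_sub_pow', div_mul_div_comm,
      mul_comm ((Nat.factorial i : ℝ)) ((i:ℝ)+1)]
  have hA : (∫ s in tₙ₁..tₙ, v s) =
      (∑ i ∈ Finset.range (p+1),
        iteratedDeriv i v tₙ₁ * (tₙ - tₙ₁) ^ (i+1) / (((i:ℝ)+1) * (Nat.factorial i)))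
      + ∫ s in tₙ₁..tₙ, (v s - ∑ i ∈ Finset.range (p+1),
          iteratedDeriv i v tₙ₁ * (s - tₙ₁) ^ i / (Nat.factorial i)) := by
    rw [intervalIntegral.integral_sub (hvc.intervalIntegrable _ _)
      (hPcont.intervalIntegrable _ _), hPint]
    ring
  -- Step B : expansion of the differences
  have hdiff : ∀ m : Fin p, v (tₙ₁ + h m) - v tₙ₁ =
      (∑ i ∈ Finset.range p,
        iteratedDeriv (i+1) v tₙ₁ * (h m) ^ (i+1) / (Nat.factorial (i+1)))
      + (v (tₙ₁ + h m) - ∑ i ∈ Finset.range (p+1),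
          iteratedDeriv i v tₙ₁ * (tₙ₁ + h m - tₙ₁) ^ i / (Nat.factorial i)) := by
    intro m
    have hm : tₙ₁ + h m - tₙ₁ = h m := by ring
    rw [hm, Finset.sum_range_succ']
    simp [iteratedDeriv_zero]
    ring
  have hBsum : ∑ m, B m * (v (tₙ₁ + h m) - v tₙ₁) =
      (∑ i ∈ Finset.range p,
        iteratedDeriv (i+1) v tₙ₁ * (tₙ - tₙ₁) ^ (i+2) / (((i:ℝ)+2) * (Nat.factorial (i+1))))
      + ∑ m, B m * (v (tₙ₁ + h m) - ∑ i ∈ Finset.range (p+1),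
          iteratedDeriv i v tₙ₁ * (tₙ₁ + h m - tₙ₁) ^ i / (Nat.factorial i)) := by
    calc ∑ m, B m * (v (tₙ₁ + h m) - v tₙ₁)
        = ∑ m, ((∑ i ∈ Finset.range p,
            B m * (iteratedDeriv (i+1) v tₙ₁ * (h m) ^ (i+1) / (Nat.factorial (i+1))))
          + B m * (v (tₙ₁ + h m) - ∑ i ∈ Finset.range (p+1),
              iteratedDeriv i v tₙ₁ * (tₙ₁ + h m - tₙ₁) ^ i / (Nat.factorial i))) := by
          refine Finset.sum_congr rfl fun m _ => ?_
          rw [hdiff m, mul_add, Finset.mul_sum]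
      _ = (∑ i ∈ Finset.range p, ∑ m, B m *
            (iteratedDeriv (i+1) v tₙ₁ * (h m) ^ (i+1) / (Nat.factorial (i+1))))
          + ∑ m, B m * (v (tₙ₁ + h m) - ∑ i ∈ Finset.range (p+1),
              iteratedDeriv i v tₙ₁ * (tₙ₁ + h m - tₙ₁) ^ i / (Nat.factorial i)) := by
          rw [Finset.sum_add_distrib, Finset.sum_comm]
      _ = (∑ i ∈ Finset.range p,
            iteratedDeriv (i+1) v tₙ₁ * (tₙ - tₙ₁) ^ (i+2) / (((i:ℝ)+2) * (Nat.factorial (i+1))))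
          + ∑ m, B m * (v (tₙ₁ + h m) - ∑ i ∈ Finset.range (p+1),
              iteratedDeriv i v tₙ₁ * (tₙ₁ + h m - tₙ₁) ^ i / (Nat.factorial i)) := by
          congr 1
          refine Finset.sum_congr rfl fun i hi => ?_
          have hBi := hB ⟨i, Finset.mem_range.mp hi⟩
          simp only [Fin.val_mk] at hBi
          have hfac : ∑ m, B m * (iteratedDeriv (i+1) v tₙ₁ * (h m) ^ (i+1) / (Nat.factorial (i+1)))
              = (iteratedDeriv (i+1) v tₙ₁ / (Nat.factorial (i+1))) * ∑ m, B m * (h m) ^ (i+1) := by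
            rw [Finset.mul_sum]
            exact Finset.sum_congr rfl fun m _ => by ring
          rw [hfac, hBi, div_mul_div_comm,
            mul_comm ((Nat.factorial (i+1) : ℝ)) ((i:ℝ)+2)]
  -- Step C : cancellation
  have hC : ∑ i ∈ Finset.range (p+1),
        iteratedDeriv i v tₙ₁ * (tₙ - tₙ₁) ^ (i+1) / (((i:ℝ)+1) * (Nat.factorial i))
      = (tₙ - tₙ₁) * v tₙ₁ + ∑ i ∈ Finset.range p,
        iteratedDeriv (i+1) v tₙ₁ * (tₙ - tₙ₁) ^ (i+2) / (((i:ℝ)+2) * (Nat.factorial (i+1))) := by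
    rw [Finset.sum_range_succ', add_comm]
    congr 1
    · simp [iteratedDeriv_zero]
      ring
    · refine Finset.sum_congr rfl fun i _ => ?_
      push_cast
      ring
  -- Step D : the error is remainder only
  have hE : (∫ s in tₙ₁..tₙ, v s) - (tₙ - tₙ₁) * v tₙ₁ -
        ∑ m, B m * (v (tₙ₁ + h m) - v tₙ₁)
      = (∫ s in tₙ₁..tₙ, (v s - ∑ i ∈ Finset.range (p+1),
            iteratedDeriv i v tₙ₁ * (s - tₙ₁) ^ i / (Nat.factorial i)))
        - ∑ m, B m * (v (tₙ₁ + h m) - ∑ i ∈ Finset.range (p+1),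
            iteratedDeriv i v tₙ₁ * (tₙ₁ + h m - tₙ₁) ^ i / (Nat.factorial i)) := by
    rw [hA, hBsum, hC]
    ring
  rw [hE]
  -- Step E : bound the integral remainder
  have hsub : Set.uIoc tₙ₁ tₙ ⊆ Set.Icc a b := by
    intro t ht
    have h2 : Set.uIcc tₙ₁ tₙ ⊆ Set.Icc a b := by
      rw [← Set.uIcc_of_le hab]
      exact Set.uIcc_subset_uIcc (by rwa [Set.uIcc_of_le hab]) (by rwa [Set.uIcc_of_le hab])
    exact h2 (Set.Ioc_subset_Icc_self ht)
  have hI : |∫ s in tₙ₁..tₙ, (v s - ∑ i ∈ Finset.range (p+1),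
        iteratedDeriv i v tₙ₁ * (s - tₙ₁) ^ i / (Nat.factorial i))| ≤
      M / (Nat.factorial (p+1)) * (|tₙ - tₙ₁| ^ (p+2) / ((p:ℝ)+2)) := by
    have hb1 : ‖∫ s in tₙ₁..tₙ, (v s - ∑ i ∈ Finset.range (p+1),
          iteratedDeriv i v tₙ₁ * (s - tₙ₁) ^ i / (Nat.factorial i))‖ ≤
        |∫ s in tₙ₁..tₙ, M * |s - tₙ₁| ^ (p+1) / (Nat.factorial (p+1))| := by
      apply intervalIntegral.norm_integral_le_abs_of_norm_le
      · refine (MeasureTheory.ae_restrict_mem measurableSet_uIoc).mono (fun t ht => ?_)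
        exact hRbound t (hsub ht)
      · exact ((continuous_const.mul
          ((continuous_id.sub continuous_const).abs.pow (p+1))).div_const
          _).intervalIntegrable _ _
    have hcomp : |∫ s in tₙ₁..tₙ, M * |s - tₙ₁| ^ (p+1) / (Nat.factorial (p+1))| =
        M / (Nat.factorial (p+1)) * (|tₙ - tₙ₁| ^ (p+2) / ((p:ℝ)+2)) := by
      have heq : (fun s : ℝ => M * |s - tₙ₁| ^ (p+1) / (Nat.factorial (p+1))) =
          fun s => (M / Nat.factorial (p+1)) * |s - tₙ₁| ^ (p+1) := by
        funext s; ring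
      rw [heq, intervalIntegral.integral_const_mul, abs_mul,
        abs_of_nonneg (div_nonneg hM0 (Nat.cast_nonneg _)), abs_integral_abs_pow]
      push_cast
      ring
    calc |∫ s in tₙ₁..tₙ, (v s - ∑ i ∈ Finset.range (p+1),
          iteratedDeriv i v tₙ₁ * (s - tₙ₁) ^ i / (Nat.factorial i))| ≤
        |∫ s in tₙ₁..tₙ, M * |s - tₙ₁| ^ (p+1) / (Nat.factorial (p+1))| := hb1
      _ = M / (Nat.factorial (p+1)) * (|tₙ - tₙ₁| ^ (p+2) / ((p:ℝ)+2)) := hcomp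
  -- Step F : bound the sum remainder
  have hS : |∑ m, B m * (v (tₙ₁ + h m) - ∑ i ∈ Finset.range (p+1),
        iteratedDeriv i v tₙ₁ * (tₙ₁ + h m - tₙ₁) ^ i / (Nat.factorial i))| ≤
      M / (Nat.factorial (p+1)) * (H ^ (p+1) * ∑ m, |B m|) := by
    calc |∑ m, B m * (v (tₙ₁ + h m) - ∑ i ∈ Finset.range (p+1),
          iteratedDeriv i v tₙ₁ * (tₙ₁ + h m - tₙ₁) ^ i / (Nat.factorial i))|
        ≤ ∑ m, |B m * (v (tₙ₁ + h m) - ∑ i ∈ Finset.range (p+1),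
            iteratedDeriv i v tₙ₁ * (tₙ₁ + h m - tₙ₁) ^ i / (Nat.factorial i))| :=
          Finset.abs_sum_le_sum_abs _ _
      _ ≤ ∑ m, |B m| * (M * H ^ (p+1) / (Nat.factorial (p+1))) := by
          refine Finset.sum_le_sum fun m _ => ?_
          rw [abs_mul]
          refine mul_le_mul_of_nonneg_left ?_ (abs_nonneg _)
          have h1 := hRbound (tₙ₁ + h m) (hmem₁ m)
          have h2 : tₙ₁ + h m - tₙ₁ = h m := by ring
          rw [h2] at h1
          rw [h2]
          refine h1.trans ?_
          apply div_le_div_of_nonneg_right ?_ (by positivity)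
          · exact mul_le_mul_of_nonneg_left
              (pow_le_pow_left₀ (abs_nonneg _) (hH m) _) hM0
      _ = M / (Nat.factorial (p+1)) * (H ^ (p+1) * ∑ m, |B m|) := by
          rw [← Finset.sum_mul]
          ring
  calc |(∫ s in tₙ₁..tₙ, (v s - ∑ i ∈ Finset.range (p+1),
          iteratedDeriv i v tₙ₁ * (s - tₙ₁) ^ i / (Nat.factorial i)))
        - ∑ m, B m * (v (tₙ₁ + h m) - ∑ i ∈ Finset.range (p+1),
            iteratedDeriv i v tₙ₁ * (tₙ₁ + h m - tₙ₁) ^ i / (Nat.factorial i))|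
      ≤ |∫ s in tₙ₁..tₙ, (v s - ∑ i ∈ Finset.range (p+1),
          iteratedDeriv i v tₙ₁ * (s - tₙ₁) ^ i / (Nat.factorial i))|
        + |∑ m, B m * (v (tₙ₁ + h m) - ∑ i ∈ Finset.range (p+1),
            iteratedDeriv i v tₙ₁ * (tₙ₁ + h m - tₙ₁) ^ i / (Nat.factorial i))| :=
        abs_sub _ _
    _ ≤ M / (Nat.factorial (p+1)) * (|tₙ - tₙ₁| ^ (p+2) / ((p:ℝ)+2))
        + M / (Nat.factorial (p+1)) * (H ^ (p+1) * ∑ m, |B m|) := add_le_add hI hS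
    _ = M / (Nat.factorial (p + 1) : ℝ) *
        (|tₙ - tₙ₁| ^ (p + 2) / (p + 2) + H ^ (p + 1) * ∑ m, |B m|) := by
        push_cast
        ring
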